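/- α-hybrid preferences are super-quasilinear for every α ≥ 1: if v > v' ≥ 0, 0 ≤ p ≤ v, 0 ≤ p' and v − p ≥ v' − p', then v^α − p^α ≥ v'^α − p'^α. -/

import Mathlib

lemma shift_rpow_mono (α : ℝ) (hα : 1 ≤ α) (d : ℝ) (hd : 0 ≤ d)
    {a b : ℝ} (hb : 0 ≤ b) (hab : b ≤ a) :
    (b + d) ^ α - b ^ α ≤ (a + d) ^ α - a ^ α := by
  have hα0 : (0:ℝ) < α := lt_of_lt_of_le one_pos hα
  have key : MonotoneOn (fun x : ℝ => (x + d) ^ α - x ^ α) (Set.Ici 0) := by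
    apply monotoneOn_of_deriv_nonneg (convex_Ici 0)
    · apply ContinuousOn.sub
      · exact ((Real.continuous_rpow_const hα0.le).comp (continuous_add_right d)).continuousOn
      · exact (Real.continuous_rpow_const hα0.le).continuousOn
    · intro x hx
      rw [interior_Ici] at hx
      have h1 : HasDerivAt (fun x : ℝ => (x + d) ^ α) (α * (x + d) ^ (α - 1) * 1) x := by
        exact (Real.hasDerivAt_rpow_const (Or.inr hα)).comp x ((hasDerivAt_id x).add_const d)
      have h2 : HasDerivAt (fun x : ℝ => x ^ α) (α * x ^ (α - 1)) x :=
        Real.hasDerivAt_rpow_const (Or.inr hα)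
      exact ((h1.sub h2).differentiableAt).differentiableWithinAt
    · intro x hx
      rw [interior_Ici] at hx
      have hx0 : (0:ℝ) < x := hx
      have h1 : HasDerivAt (fun x : ℝ => (x + d) ^ α) (α * (x + d) ^ (α - 1) * 1) x := by
        exact (Real.hasDerivAt_rpow_const (Or.inr hα)).comp x ((hasDerivAt_id x).add_const d)
      have h2 : HasDerivAt (fun x : ℝ => x ^ α) (α * x ^ (α - 1)) x :=
        Real.hasDerivAt_rpow_const (Or.inr hα)
      rw [(show HasDerivAt (fun x : ℝ => (x + d) ^ α - x ^ α) (α * (x + d) ^ (α - 1) * 1 - α * x ^ (α - 1)) x from h1.sub h2).deriv]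
      have : x ^ (α - 1) ≤ (x + d) ^ (α - 1) :=
        Real.rpow_le_rpow hx0.le (by linarith) (by linarith)
      nlinarith
  exact key hb (le_trans hb hab) hab

theorem hybrid_prefs_super_quasilinear
    (α : ℝ) (hα : 1 ≤ α)
    (v v' p p' : ℝ)
    (hvv' : v > v') (hv' : 0 ≤ v')
    (hp0 : 0 ≤ p) (hpv : p ≤ v)
    (hp' : 0 ≤ p')
    (hsurplus : v - p ≥ v' - p') :
    v' ^ α - p' ^ α ≤ v ^ α - p ^ α := by
  rcases le_total p' p with h | h
  · -- p' ≤ p : use v' ≤ p' + (v - p) and monotonicity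
    have hd : 0 ≤ v - p := by linarith
    have h1 : v' ^ α ≤ (p' + (v - p)) ^ α :=
      Real.rpow_le_rpow hv' (by linarith) (by linarith)
    have h2 : (p' + (v - p)) ^ α - p' ^ α ≤ (p + (v - p)) ^ α - p ^ α :=
      shift_rpow_mono α hα (v - p) hd hp' h
    have : p + (v - p) = v := by ring
    rw [this] at h2
    linarith
  · -- p ≤ p' : both terms compare directly
    have h1 : v' ^ α ≤ v ^ α := Real.rpow_le_rpow hv' hvv'.le (by linarith)
    have h2 : p ^ α ≤ p' ^ α := Real.rpow_le_rpow hp0 h (by linarith)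
    linarith
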